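/- Let A be a nonnegative selfadjoint operator on a complex Hilbert space X with trivial kernel, let α ∈ (0, 1/2], and let g ∈ R(A^α). Then the solution W_A(t)g of w''+Aw=0, (w,w')(0)=(0,g) satisfies t^{2α-1}‖W_A(t)g‖_X ≤ 2^{1/2+α(1-2α)} (∫₀^∞ s^{2α-1}‖e^{-sA}g‖²_X ds)^{1/2} for all t > 0. In particular, if α = 1/2 then W_A(·)g is uniformly bounded in X. -/

import Mathlib

/-!
By the spectral theorem, every nonnegative selfadjoint operator `A` on a complex
Hilbert space `X` (with trivial kernel) is unitarily equivalent to multiplication by a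
measurable function `a ≥ 0` (with `a > 0` a.e.) on some `L²(μ)`.  We formalize the
statement in this spectral model: `X = L²(μ)`, `(e^{-tA}x)(i) = exp(-t·a i)·x i`,
`(A^α y)(i) = (a i)^α·y i`, and `x ∈ R(A^α)` iff `x = A^α y` for some `y ∈ L²(μ)`.
-/

open MeasureTheory Filter
open scoped ENNReal NNReal Topology

/-- `‖e^{-tA} x‖²` in the spectral model. -/
noncomputable def heatNormSq {ι : Type*} [MeasurableSpace ι] (μ : Measure ι)
    (a : ι → ℝ) (x : ι → ℂ) (t : ℝ) : ℝ≥0∞ :=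
  ∫⁻ i, (‖x i‖₊ : ℝ≥0∞) ^ 2 * ENNReal.ofReal (Real.exp (-(2 * t * a i))) ∂μ

/-- `∫₀^∞ t^{2α-1} ‖e^{-tA} x‖² dt` in the spectral model; this is the square of the
norm `|||x|||_{R(A^α)}`. -/
noncomputable def rangeIntegral {ι : Type*} [MeasurableSpace ι] (μ : Measure ι)
    (a : ι → ℝ) (α : ℝ) (x : ι → ℂ) : ℝ≥0∞ :=
  ∫⁻ t in Set.Ioi (0 : ℝ), ENNReal.ofReal (t ^ (2 * α - 1)) * heatNormSq μ a x t

/-- The wave-propagator kernel `sin(t√λ)/√λ` (continuously extended by `t` at `λ = 0`),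
so that `(W_A(t)g)(i) = waveKernel t (a i) · g i` in the spectral model. -/
noncomputable def waveKernel (t lam : ℝ) : ℝ :=
  if lam = 0 then t else Real.sin (t * Real.sqrt lam) / Real.sqrt lam

lemma one_le_Gamma_aux {x : ℝ} (hx : 0 < x) (hx1 : x ≤ 1) : 1 ≤ Real.Gamma x := by
  rcases eq_or_lt_of_le hx1 with h | h
  · simp [h, Real.Gamma_one]
  · have h2x : 0 < 2 - x := by linarith
    set θ : ℝ := 1 / (2 - x) with hθ
    have hθpos : 0 < θ := by positivity
    have hθ1 : θ ≤ 1 := by rw [hθ, div_le_one h2x]; linarith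
    have hcomb : θ * x + (1 - θ) * 2 = 1 := by rw [hθ]; field_simp; ring
    have := Real.convexOn_Gamma.2 (Set.mem_Ioi.2 hx) (Set.mem_Ioi.2 (by norm_num : (0:ℝ) < 2))
      hθpos.le (by linarith : (0:ℝ) ≤ 1 - θ) (by ring)
    rw [smul_eq_mul, smul_eq_mul, smul_eq_mul, smul_eq_mul, hcomb, Real.Gamma_one,
      Real.Gamma_two] at this
    nlinarith

lemma key_real {α t lam : ℝ} (hα1 : 0 < α) (hα2 : α ≤ 1/2) (ht : 0 < t) (hlam : 0 < lam) :
    (t ^ (2*α-1))^2 * (waveKernel t lam)^2 ≤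
      (2 ^ ((1:ℝ)/2 + α*(1-2*α)))^2 * ((1/(2*lam)) ^ (2*α) * Real.Gamma (2*α)) := by
  have hs : 0 < Real.sqrt lam := Real.sqrt_pos.2 hlam
  have hs2 : Real.sqrt lam ^ 2 = lam := Real.sq_sqrt hlam.le
  have hwk : (waveKernel t lam)^2 ≤ min (t^2) (1/lam) := by
    rw [waveKernel, if_neg hlam.ne', div_pow, hs2]
    refine le_min ?_ ?_
    · rw [div_le_iff₀ hlam]
      calc Real.sin (t*Real.sqrt lam)^2 ≤ (t*Real.sqrt lam)^2 := Real.sin_sq_le_sq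
        _ = t^2*lam := by rw [mul_pow, hs2]
    · gcongr
      exact Real.sin_sq_le_one _
  have hwknn : 0 ≤ (waveKernel t lam)^2 := sq_nonneg _
  have htr : (t ^ (2*α-1))^2 = (t^2) ^ (2*α-1) := by
    rw [← Real.rpow_natCast (t ^ (2*α-1)) 2, ← Real.rpow_mul ht.le,
      ← Real.rpow_natCast t 2, ← Real.rpow_mul ht.le]
    norm_num; ring_nf
  have h1 : (t ^ (2*α-1))^2 * (waveKernel t lam)^2 ≤ lam ^ (-(2*α)) := by
    have hinv : (1/lam) ^ (2*α) = lam ^ (-(2*α)) := by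
      rw [one_div, ← Real.rpow_neg_one lam, ← Real.rpow_mul hlam.le]; ring_nf
    rw [htr]
    rcases le_total (t^2) (1/lam) with hc | hc
    · calc (t^2) ^ (2*α-1) * (waveKernel t lam)^2
          ≤ (t^2) ^ (2*α-1) * (t^2) := by
            have := min_le_left (t^2) (1/lam)
            exact mul_le_mul_of_nonneg_left (hwk.trans this) (Real.rpow_nonneg (sq_nonneg t) _)
        _ = (t^2) ^ (2*α) := by
            rw [← Real.rpow_add_one (by positivity : (t:ℝ)^2 ≠ 0) (2*α-1)]
            ring_nf
        _ ≤ (1/lam) ^ (2*α) := Real.rpow_le_rpow (sq_nonneg t) hc (by positivity)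
        _ = lam ^ (-(2*α)) := hinv
    · calc (t^2) ^ (2*α-1) * (waveKernel t lam)^2
          ≤ (1/lam) ^ (2*α-1) * (1/lam) := by
            refine mul_le_mul ?_ (hwk.trans (min_le_right _ _)) hwknn
              (Real.rpow_nonneg (by positivity) _)
            exact Real.rpow_le_rpow_of_nonpos (by positivity) hc (by linarith)
        _ = (1/lam) ^ (2*α) := by
            rw [← Real.rpow_add_one (by positivity : (1:ℝ)/lam ≠ 0) (2*α-1)]
            ring_nf
        _ = lam ^ (-(2*α)) := hinv
  refine h1.trans ?_
  have h2 : ((2:ℝ) ^ ((1:ℝ)/2 + α*(1-2*α)))^2 = 2 ^ (1 + 2*α*(1-2*α)) := by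
    rw [← Real.rpow_natCast ((2:ℝ) ^ ((1:ℝ)/2 + α*(1-2*α))) 2,
      ← Real.rpow_mul (by norm_num : (0:ℝ) ≤ 2)]
    norm_num; ring_nf
  have h3 : (1/(2*lam)) ^ (2*α) = 2 ^ (-(2*α)) * lam ^ (-(2*α)) := by
    rw [one_div, ← Real.rpow_neg_one (2*lam), ← Real.rpow_mul (by positivity),
      neg_one_mul, Real.mul_rpow (by norm_num) hlam.le]
  rw [h2, h3]
  have h4 : (2:ℝ) ^ (1 + 2*α*(1-2*α)) * 2 ^ (-(2*α)) = 2 ^ (1 - 4*α^2) := by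
    rw [← Real.rpow_add (by norm_num : (0:ℝ) < 2)]; ring_nf
  have hΓ : 1 ≤ Real.Gamma (2*α) := one_le_Gamma_aux (by linarith) (by linarith)
  have h5 : (1:ℝ) ≤ 2 ^ (1 - 4*α^2) := by
    rw [show (1:ℝ) = (2:ℝ) ^ (0:ℝ) by simp]
    exact Real.rpow_le_rpow_of_exponent_le one_le_two (by nlinarith)
  have h6 : 0 < lam ^ (-(2*α)) := Real.rpow_pos_of_pos hlam _
  calc lam ^ (-(2*α)) = 1 * lam ^ (-(2*α)) * 1 := by ring
    _ ≤ 2 ^ (1-4*α^2) * lam ^ (-(2*α)) * Real.Gamma (2*α) := by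
        exact mul_le_mul (mul_le_mul h5 le_rfl h6.le (by positivity)) hΓ zero_le_one (by positivity)
    _ = 2 ^ (1 + 2*α*(1-2*α)) * (2 ^ (-(2*α)) * lam ^ (-(2*α)) * Real.Gamma (2*α)) := by
        rw [← h4]; ring

open MeasureTheory in
lemma key_ennreal {α t lam : ℝ} (hα1 : 0 < α) (hα2 : α ≤ 1/2) (ht : 0 < t) (hlam : 0 < lam) :
    ENNReal.ofReal (t ^ (2*α-1)) ^ 2 * ENNReal.ofReal ((waveKernel t lam)^2)
      ≤ ENNReal.ofReal (2 ^ ((1:ℝ)/2 + α * (1 - 2*α))) ^ 2 *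
        ∫⁻ s in Set.Ioi (0:ℝ), ENNReal.ofReal (s ^ (2*α-1)) *
          ENNReal.ofReal (Real.exp (-(2 * s * lam))) := by
  have hint : MeasureTheory.IntegrableOn
      (fun s : ℝ => s ^ (2*α-1) * Real.exp (-(2*lam*s))) (Set.Ioi 0) := by
    have h := integrableOn_rpow_mul_exp_neg_mul_rpow
      (show (-1:ℝ) < 2*α-1 by linarith) (zero_lt_one : (0:ℝ) < 1) (by positivity : (0:ℝ) < 2*lam)
    refine h.congr_fun ?_ measurableSet_Ioi
    intro x hx
    simp only [Real.rpow_one, neg_mul]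
  have hnn : 0 ≤ᵐ[volume.restrict (Set.Ioi (0:ℝ))]
      (fun s : ℝ => s ^ (2*α-1) * Real.exp (-(2*lam*s))) :=
    (MeasureTheory.ae_restrict_mem measurableSet_Ioi).mono
      (fun x hx => mul_nonneg (Real.rpow_nonneg (le_of_lt hx) _) (Real.exp_nonneg _))
  have heq : (∫⁻ s in Set.Ioi (0:ℝ), ENNReal.ofReal (s ^ (2*α-1)) *
          ENNReal.ofReal (Real.exp (-(2 * s * lam))))
      = ENNReal.ofReal ((1/(2*lam)) ^ (2*α) * Real.Gamma (2*α)) := by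
    have e1 : ∀ᵐ s ∂(volume.restrict (Set.Ioi (0:ℝ))),
        ENNReal.ofReal (s ^ (2*α-1)) * ENNReal.ofReal (Real.exp (-(2 * s * lam)))
          = ENNReal.ofReal (s ^ (2*α-1) * Real.exp (-(2*lam*s))) := by
      refine (MeasureTheory.ae_restrict_mem measurableSet_Ioi).mono (fun s hs => ?_)
      rw [← ENNReal.ofReal_mul (Real.rpow_nonneg (le_of_lt hs) _)]
      ring_nf
    rw [lintegral_congr_ae e1,
      ← MeasureTheory.ofReal_integral_eq_lintegral_ofReal hint hnn,
      ← Real.integral_rpow_mul_exp_neg_mul_Ioi (by linarith : (0:ℝ) < 2*α)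
        (by positivity : (0:ℝ) < 2*lam)]
  rw [heq, ← ENNReal.ofReal_pow (Real.rpow_nonneg ht.le _),
    ← ENNReal.ofReal_pow (by positivity),
    ← ENNReal.ofReal_mul (by positivity), ← ENNReal.ofReal_mul (by positivity)]
  exact ENNReal.ofReal_le_ofReal (key_real hα1 hα2 ht hlam)

/-- For `α ∈ (0,1/2]` and `g ∈ R(A^α)`, the solution `W_A(t)g` of the
abstract wave equation with data `(0,g)` satisfies
`t^{2α-1} ‖W_A(t)g‖_X ≤ 2^{1/2+α(1-2α)} (∫₀^∞ s^{2α-1}‖e^{-sA}g‖² ds)^{1/2}` for `t > 0`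
(in particular, for `α = 1/2` the solution is uniformly bounded in `X`). -/
theorem stmt9 {ι : Type*} [MeasurableSpace ι] (μ : Measure ι)
    (a : ι → ℝ) (hameas : Measurable a) (ha0 : ∀ i, 0 ≤ a i)
    (hker : ∀ᵐ i ∂μ, a i ≠ 0)
    (α : ℝ) (hα1 : 0 < α) (hα2 : α ≤ 1 / 2)
    (g : ι → ℂ) (hg : MemLp g 2 μ)
    (hgR : ∃ y : ι → ℂ, MemLp y 2 μ ∧ g =ᵐ[μ] fun i => ((a i ^ α : ℝ) : ℂ) * y i)
    (t : ℝ) (ht : 0 < t) :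
    ENNReal.ofReal (t ^ (2 * α - 1)) *
        eLpNorm (fun i => ((waveKernel t (a i) : ℝ) : ℂ) * g i) 2 μ
      ≤ ENNReal.ofReal (2 ^ ((1 : ℝ) / 2 + α * (1 - 2 * α))) *
        (rangeIntegral μ a α g) ^ ((1 : ℝ) / 2) := by
  obtain ⟨g', hg'sm, hgg'⟩ := hg.aestronglyMeasurable
  have hg'meas : Measurable g' := hg'sm.measurable
  set N : ι → ℝ≥0∞ := fun i => (‖g' i‖₊ : ℝ≥0∞) ^ 2 with hN
  have hNmeas : Measurable N := (hg'meas.nnnorm.coe_nnreal_ennreal).pow_const 2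
  have hNtop : ∀ i, N i ≠ ∞ := fun i => ENNReal.pow_ne_top ENNReal.coe_ne_top
  have hfin : AEFinStronglyMeasurable g μ :=
    hg.aefinStronglyMeasurable (by norm_num) (by norm_num)
  set S := hfin.sigmaFiniteSet with hSdef
  have hSm : MeasurableSet S := hfin.measurableSet
  haveI : SigmaFinite (μ.restrict S) := hfin.sigmaFinite_restrict
  have hg0 : g =ᵐ[μ.restrict Sᶜ] 0 := hfin.ae_eq_zero_compl
  have hgg'S : g =ᵐ[μ.restrict S] g' := ae_restrict_of_ae hgg'
  set c : ℝ≥0∞ := ENNReal.ofReal (t ^ (2 * α - 1)) with hc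
  set K : ℝ≥0∞ := ENNReal.ofReal (2 ^ ((1:ℝ)/2 + α * (1 - 2 * α))) with hK
  set wsq : ι → ℝ≥0∞ := fun i => ENNReal.ofReal ((waveKernel t (a i))^2) with hwsq
  set J : ℝ → ℝ≥0∞ := fun lam => ∫⁻ s in Set.Ioi (0:ℝ),
    ENNReal.ofReal (s ^ (2*α-1)) * ENNReal.ofReal (Real.exp (-(2 * s * lam))) with hJ
  set E : ℝ → ι → ℝ≥0∞ := fun s i => ENNReal.ofReal (Real.exp (-(2 * s * a i))) with hE
  set F : ℝ → ι → ℝ≥0∞ :=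
    fun s i => N i * (ENNReal.ofReal (s ^ (2*α-1)) * E s i) with hF
  set L : ℝ≥0∞ := ∫⁻ i, wsq i * N i ∂(μ.restrict S) with hL
  -- Step 1: the squared norm of the wave solution
  have hinteq : ∀ i : ι, ((‖(((waveKernel t (a i) : ℝ)) : ℂ) * g i‖₊ : ℝ≥0∞)) ^ (2:ℝ)
      = wsq i * (‖g i‖₊ : ℝ≥0∞) ^ 2 := by
    intro i
    rw [show (2:ℝ) = ((2:ℕ):ℝ) by norm_num, ENNReal.rpow_natCast,
      nnnorm_mul, ENNReal.coe_mul, mul_pow]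
    congr 1
    have hw : (waveKernel t (a i))^2 = ‖((waveKernel t (a i) : ℝ) : ℂ)‖^2 := by
      simp [Complex.norm_real, Real.norm_eq_abs, sq_abs]
    rw [hwsq]
    simp only []
    rw [hw, ENNReal.ofReal_pow (norm_nonneg _), ofReal_norm, enorm_eq_nnnorm]
  have hsnorm : eLpNorm (fun i => ((waveKernel t (a i) : ℝ) : ℂ) * g i) 2 μ
      = (∫⁻ i, wsq i * (‖g i‖₊ : ℝ≥0∞)^2 ∂μ) ^ ((1:ℝ)/2) := by
    rw [eLpNorm_eq_lintegral_rpow_enorm_toReal (by norm_num) (by norm_num),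
      ENNReal.toReal_ofNat]
    congr 1
    exact lintegral_congr hinteq
  -- Step 2: restriction to the sigma-finite support
  have hsplit : (∫⁻ i, wsq i * (‖g i‖₊ : ℝ≥0∞)^2 ∂μ) = L := by
    rw [← lintegral_add_compl (fun i => wsq i * (‖g i‖₊ : ℝ≥0∞)^2) hSm]
    have hz : ∫⁻ i, wsq i * (‖g i‖₊ : ℝ≥0∞)^2 ∂(μ.restrict Sᶜ) = 0 := by
      have h0 : (fun i => wsq i * (‖g i‖₊ : ℝ≥0∞)^2) =ᵐ[μ.restrict Sᶜ] 0 :=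
        hg0.mono fun i hi => by simp [hi]
      rw [lintegral_congr_ae h0]
      simp
    have hS1 : ∫⁻ i, wsq i * (‖g i‖₊ : ℝ≥0∞)^2 ∂(μ.restrict S) = L := by
      rw [hL]
      exact lintegral_congr_ae (hgg'S.mono fun i hi => by rw [hN]; simp [hi])
    rw [hz, hS1, add_zero]
  -- Step 3: positivity of a on the support
  have hker' : ∀ᵐ i ∂(μ.restrict S), 0 < a i :=
    (ae_restrict_of_ae hker).mono fun i hi => lt_of_le_of_ne (ha0 i) (Ne.symm hi)
  -- Step 4: measurability of the double integrand
  have hFmeas : Measurable (Function.uncurry F) := by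
    apply Measurable.fun_mul
    · exact hNmeas.comp measurable_snd
    · apply Measurable.fun_mul
      · apply Measurable.ennreal_ofReal
        have hm : Measurable fun x : ℝ => x ^ (2*α-1) := by measurability
        exact hm.comp measurable_fst
      · apply Measurable.ennreal_ofReal
        apply Real.measurable_exp.comp
        exact (((measurable_const (a := (2:ℝ)) ).mul measurable_fst).mul
          (hameas.comp measurable_snd)).neg
  -- Step 5: Tonelli
  have hswap : (∫⁻ s in Set.Ioi (0:ℝ), (∫⁻ i, F s i ∂(μ.restrict S)))
      = ∫⁻ i, (∫⁻ s in Set.Ioi (0:ℝ), F s i) ∂(μ.restrict S) :=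
    lintegral_lintegral_swap hFmeas.aemeasurable
  -- Step 6: comparison with the range integral
  have hRIle : ∫⁻ i, N i * J (a i) ∂(μ.restrict S) ≤ rangeIntegral μ a α g := by
    have e1 : ∫⁻ i, N i * J (a i) ∂(μ.restrict S)
        = ∫⁻ i, (∫⁻ s in Set.Ioi (0:ℝ), F s i) ∂(μ.restrict S) := by
      refine lintegral_congr fun i => ?_
      rw [hJ, ← lintegral_const_mul' _ _ (hNtop i)]
    rw [e1, ← hswap, rangeIntegral]
    refine lintegral_mono fun s => ?_
    have e2 : ∫⁻ i, F s i ∂(μ.restrict S)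
        = ENNReal.ofReal (s ^ (2*α-1)) * ∫⁻ i, N i * E s i ∂(μ.restrict S) := by
      rw [← lintegral_const_mul' _ _ ENNReal.ofReal_ne_top]
      refine lintegral_congr fun i => ?_
      rw [hF]; ring
    rw [e2]
    refine mul_le_mul_right ?_ _
    have e3 : ∫⁻ i, N i * E s i ∂(μ.restrict S)
        = ∫⁻ i, (‖g i‖₊ : ℝ≥0∞)^2 * E s i ∂(μ.restrict S) :=
      lintegral_congr_ae (hgg'S.mono fun i hi => by rw [hN]; simp [hi, mul_comm])
    rw [e3, heatNormSq]
    exact lintegral_mono' Measure.restrict_le_self le_rfl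
  -- Step 7: core estimate
  have hcore : c^2 * L ≤ K^2 * rangeIntegral μ a α g := by
    have e4 : c^2 * L = ∫⁻ i, (c^2 * wsq i) * N i ∂(μ.restrict S) := by
      rw [hL, ← lintegral_const_mul' _ _ (ENNReal.pow_ne_top ENNReal.ofReal_ne_top)]
      refine lintegral_congr fun i => ?_
      ring
    have e5 : ∫⁻ i, (c^2 * wsq i) * N i ∂(μ.restrict S)
        ≤ ∫⁻ i, (K^2 * J (a i)) * N i ∂(μ.restrict S) := by
      refine lintegral_mono_ae (hker'.mono fun i hi => ?_)
      exact mul_le_mul_left (key_ennreal hα1 hα2 ht hi) _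
    have e6 : ∫⁻ i, (K^2 * J (a i)) * N i ∂(μ.restrict S)
        = K^2 * ∫⁻ i, N i * J (a i) ∂(μ.restrict S) := by
      rw [← lintegral_const_mul' _ _ (ENNReal.pow_ne_top ENNReal.ofReal_ne_top)]
      refine lintegral_congr fun i => ?_
      ring
    rw [e4]
    exact e5.trans (e6.le.trans (mul_le_mul_right hRIle _))
  -- Step 8: take square roots
  rw [hsnorm, hsplit]
  have hcrt : c = (c^2) ^ ((1:ℝ)/2) := by
    rw [← ENNReal.rpow_natCast c 2, ← ENNReal.rpow_mul]
    norm_num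
  have hKrt : K = (K^2) ^ ((1:ℝ)/2) := by
    rw [← ENNReal.rpow_natCast K 2, ← ENNReal.rpow_mul]
    norm_num
  calc c * L ^ ((1:ℝ)/2)
      = (c^2 * L) ^ ((1:ℝ)/2) := by
        rw [ENNReal.mul_rpow_of_nonneg _ _ (by norm_num : (0:ℝ) ≤ 1/2), ← hcrt]
    _ ≤ (K^2 * rangeIntegral μ a α g) ^ ((1:ℝ)/2) :=
        ENNReal.rpow_le_rpow hcore (by norm_num)
    _ = K * (rangeIntegral μ a α g) ^ ((1:ℝ)/2) := by
        rw [ENNReal.mul_rpow_of_nonneg _ _ (by norm_num : (0:ℝ) ≤ 1/2), ← hKrt]
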